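/- Let d ≥ 1 and let G₁, G₂ be finitely supported probability measures on ℝ^d × S_d^{++}(ℝ). Suppose that for every v ∈ ℝ^d with ‖v‖₂ = 1, the pushforward measures of G₁ and G₂ under the map P'_v(μ,Σ) = (⟨v,μ⟩, vᵀΣv) ∈ ℝ² coincide. Then G₁ = G₂. -/

import Mathlib

open MeasureTheory ProbabilityTheory Matrix ENNReal
open scoped RealInnerProductSpace

noncomputable section

namespace PaperSOT

/-- `ℝ^d` with the Euclidean norm. -/
abbrev E (d : ℕ) := EuclideanSpace ℝ (Fin d)

/-- real `d × d` matrices. -/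
abbrev Mat (d : ℕ) := Matrix (Fin d) (Fin d) ℝ

instance (d : ℕ) : MeasurableSpace (Mat d) :=
  (inferInstance : MeasurableSpace (Fin d → Fin d → ℝ))

/-- squared Frobenius norm `‖A‖_F² = Tr(Aᵀ A)`. -/
def frobSq {d : ℕ} (A : Mat d) : ℝ := (Aᵀ * A).trace

/-- Frobenius norm `‖A‖_F = sqrt (Tr (Aᵀ A))`. -/
def frobNorm {d : ℕ} (A : Mat d) : ℝ := Real.sqrt (frobSq A)

/-- the (unique, when it exists) symmetric logarithm of a matrix: for a symmetric
positive definite `Σ` this is the unique symmetric `S` with `exp S = Σ`. -/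
def symLog {d : ℕ} (M : Mat d) : Mat d := by
  classical exact if h : ∃ S : Mat d, S.IsSymm ∧ NormedSpace.exp S = M then h.choose else 0

/-- `π` is a coupling of `μ` and `ν`: its marginals are `μ` and `ν`. -/
def IsCoupling {X Y : Type*} [MeasurableSpace X] [MeasurableSpace Y]
    (π : Measure (X × Y)) (μ : Measure X) (ν : Measure Y) : Prop :=
  π.map Prod.fst = μ ∧ π.map Prod.snd = ν

/-- the Wasserstein-`p` cost `W_p^p` between two measures on `ℝ`:
the infimum over couplings of `∫ |x-y|^p dπ`. -/
def Wp (p : ℝ) (ν₁ ν₂ : Measure ℝ) : ℝ≥0∞ :=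
  ⨅ (π : Measure (ℝ × ℝ)) (_ : IsCoupling π ν₁ ν₂),
    ∫⁻ z, ENNReal.ofReal (|z.1 - z.2| ^ p) ∂π

/-- the standard Gaussian measure on `ℝ^d`. -/
def stdGaussianE (d : ℕ) : Measure (E d) :=
  (Measure.pi fun _ : Fin d => gaussianReal 0 1).map
    (MeasurableEquiv.toLp 2 (Fin d → ℝ))

/-- the uniform probability distribution on the unit sphere of `ℝ^d`,
realized as the law of a normalized standard Gaussian vector. -/
def unifSphere (d : ℕ) : Measure (E d) :=
  (stdGaussianE d).map (fun x => ‖x‖⁻¹ • x)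

/-- the standard Gaussian measure on `d × d` matrices (i.i.d. standard normal entries). -/
def stdGaussianMat (d : ℕ) : Measure (Mat d) :=
  (Measure.pi fun _ : Fin d => Measure.pi fun _ : Fin d => gaussianReal 0 1 :
    Measure (Fin d → Fin d → ℝ)).map (fun g => (Matrix.of g : Mat d))

/-- the uniform probability distribution on the unit Frobenius sphere of the space of
real symmetric `d × d` matrices, realized as the law of a Frobenius-normalized isotropic
Gaussian symmetric matrix. -/
def unifSymSphere (d : ℕ) : Measure (Mat d) :=
  (stdGaussianMat d).map (fun g =>
    (frobNorm ((2:ℝ)⁻¹ • (g + gᵀ)))⁻¹ • ((2:ℝ)⁻¹ • (g + gᵀ)))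

/-- the space `S_d^{++}(ℝ)` of real symmetric positive definite `d × d` matrices. -/
abbrev PDMat (d : ℕ) := {M : Mat d // M.PosDef}

/-- the quadratic form `vᵀ M v`. -/
def quad {d : ℕ} (v : E d) (M : Mat d) : ℝ := ∑ i, ∑ j, v i * M i j * v j

/-- the generalized geodesic projection
`P_{V_w}(μ, Σ) = w₁ ⟨μ, v⟩ + w₂ Tr(A log Σ)` on `ℝ^d × S_d^{++}(ℝ)`. -/
def projMix {d : ℕ} (w : E 2) (v : E d) (A : Mat d) (x : E d × PDMat d) : ℝ :=
  w 0 * ⟪x.1, v⟫ + w 1 * (A * symLog x.2.1).trace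

/-- the mixed sliced Wasserstein distance (raised to the power `p`),
`Mix-SW_p^p(G₁,G₂) = ∫ W_p^p(P_{V_w}♯G₁, P_{V_w}♯G₂) dσ(w,v,A)`, where `σ` is the product
of the uniform distributions on the unit circle, the unit sphere of `ℝ^d` and the unit
Frobenius sphere of symmetric `d × d` matrices. -/
def MixSW (d : ℕ) (p : ℝ) (G₁ G₂ : Measure (E d × PDMat d)) : ℝ≥0∞ :=
  ∫⁻ w, ∫⁻ v, ∫⁻ A,
      Wp p (G₁.map (projMix w v A)) (G₂.map (projMix w v A))
    ∂(unifSymSphere d) ∂(unifSphere d) ∂(unifSphere 2)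

/-- the log-Euclidean distance
`d((μ₁,Σ₁),(μ₂,Σ₂)) = sqrt(‖μ₁-μ₂‖² + ‖log Σ₁ - log Σ₂‖_F²)` on `ℝ^d × S_d^{++}(ℝ)`. -/
def dLE {d : ℕ} (x y : E d × PDMat d) : ℝ :=
  Real.sqrt (‖x.1 - y.1‖ ^ 2 + frobSq (symLog x.2.1 - symLog y.2.1))

/-- the projection `P_{v,w}(μ,Σ) = w₁ ⟨v,μ⟩ + w₂ log √(vᵀ Σ v)` used by the sliced
mixture Wasserstein distance. -/
def projSMix {d : ℕ} (w : E 2) (v : E d) (x : E d × PDMat d) : ℝ :=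
  w 0 * ⟪v, x.1⟫ + w 1 * Real.log (Real.sqrt (quad v x.2.1))

/-- the sliced mixture Wasserstein distance (raised to the power `p`),
`SMix-W_p^p(G₁,G₂) = ∫ W_p^p(P_{v,w}♯G₁, P_{v,w}♯G₂) dσ(w,v)`, where `σ` is the product of
the uniform distributions on the unit circle and on the unit sphere of `ℝ^d`. -/
def SMixW (d : ℕ) (p : ℝ) (G₁ G₂ : Measure (E d × PDMat d)) : ℝ≥0∞ :=
  ∫⁻ w, ∫⁻ v,
      Wp p (G₁.map (projSMix w v)) (G₂.map (projSMix w v))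
    ∂(unifSphere d) ∂(unifSphere 2)

/-- the symmetrized log-Rayleigh quantity
`L(Σ₁,Σ₂) = sup_{‖u‖=1} |log (uᵀΣ₁u / uᵀΣ₂u)|`. -/
def logRayleigh {d : ℕ} (S₁ S₂ : Mat d) : ℝ :=
  sSup {r : ℝ | ∃ u : E d, ‖u‖ = 1 ∧ r = |Real.log (quad u S₁ / quad u S₂)|}

/-- the distance `d_S((μ₁,Σ₁),(μ₂,Σ₂)) = sqrt(‖μ₁-μ₂‖² + (1/4) L(Σ₁,Σ₂)²)`. -/
def dS {d : ℕ} (x y : E d × PDMat d) : ℝ :=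
  Real.sqrt (‖x.1 - y.1‖ ^ 2 + (1/4) * (logRayleigh x.2.1 y.2.1) ^ 2)

/-- a measure is finitely supported if some finite set has full measure. -/
def FinSupp {X : Type*} [MeasurableSpace X] (G : Measure X) : Prop :=
  ∃ s : Finset X, G (↑s : Set X)ᶜ = 0

def psdSqrt {d : ℕ} {S : Mat d} (hS : S.PosSemidef) : Mat d :=
  hS.1.eigenvectorUnitary.1 * diagonal ((↑) ∘ Real.sqrt ∘ hS.1.eigenvalues) *
  (star hS.1.eigenvectorUnitary : Mat d)

/-- the Gaussian measure `N(m, Σ)` on `ℝ^d` (with `Σ` positive semidefinite), realized as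
the law of `m + Σ^{1/2} Z` for a standard Gaussian vector `Z`. -/
def gaussianE {d : ℕ} (m : E d) {S : Mat d} (hS : S.PosSemidef) : Measure (E d) :=
  (stdGaussianE d).map (fun x =>
    m + (MeasurableEquiv.toLp 2 (Fin d → ℝ)) ((psdSqrt hS).mulVec (fun i => x i)))

-- auxiliary
instance (d : ℕ) : MeasurableSingletonClass (Mat d) :=
  (inferInstance : MeasurableSingletonClass (Fin d → Fin d → ℝ))

private def bilin {d : ℕ} (A : Mat d) (u w : E d) : ℝ := ∑ i, ∑ j, u i * A i j * w j

private lemma quad_eq_bilin {d : ℕ} (v : E d) (A : Mat d) : quad v A = bilin A v v := rfl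

private lemma bilin_single {d : ℕ} (A : Mat d) (i j : Fin d) :
    bilin A (EuclideanSpace.single i (1:ℝ)) (EuclideanSpace.single j (1:ℝ)) = A i j := by
  simp [bilin, EuclideanSpace.single_apply, ite_mul, mul_ite, Finset.sum_ite_eq']

private lemma bilin_add_left {d : ℕ} (A : Mat d) (u v w : E d) :
    bilin A (u + v) w = bilin A u w + bilin A v w := by
  simp only [bilin]
  rw [← Finset.sum_add_distrib]
  refine Finset.sum_congr rfl fun i _ => ?_
  rw [← Finset.sum_add_distrib]
  refine Finset.sum_congr rfl fun j _ => ?_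
  have : (u + v) i = u i + v i := rfl
  rw [this]; ring

private lemma bilin_add_right {d : ℕ} (A : Mat d) (u v w : E d) :
    bilin A u (v + w) = bilin A u v + bilin A u w := by
  simp only [bilin]
  rw [← Finset.sum_add_distrib]
  refine Finset.sum_congr rfl fun i _ => ?_
  rw [← Finset.sum_add_distrib]
  refine Finset.sum_congr rfl fun j _ => ?_
  have : (v + w) j = v j + w j := rfl
  rw [this]; ring

private lemma quad_smul {d : ℕ} (c : ℝ) (v : E d) (A : Mat d) :
    quad (c • v) A = c ^ 2 * quad v A := by
  unfold quad
  rw [Finset.mul_sum]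
  refine Finset.sum_congr rfl fun i _ => ?_
  rw [Finset.mul_sum]
  refine Finset.sum_congr rfl fun j _ => ?_
  have hi : (c • v) i = c * v i := rfl
  have hj : (c • v) j = c * v j := rfl
  rw [hi, hj]; ring

private lemma quad_sub {d : ℕ} (v : E d) (A B : Mat d) :
    quad v (A - B) = quad v A - quad v B := by
  unfold quad
  rw [← Finset.sum_sub_distrib]
  refine Finset.sum_congr rfl fun i _ => ?_
  rw [← Finset.sum_sub_distrib]
  refine Finset.sum_congr rfl fun j _ => ?_
  have : (A - B) i j = A i j - B i j := rfl
  rw [this]; ring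

/-- a symmetric matrix with vanishing quadratic form is zero -/
private lemma eq_zero_of_quad {d : ℕ} (A : Mat d) (hsym : A.IsHermitian)
    (h : ∀ w : E d, quad w A = 0) : A = 0 := by
  have hdiag : ∀ i, A i i = 0 := by
    intro i
    have := h (EuclideanSpace.single i (1:ℝ))
    rwa [quad_eq_bilin, bilin_single] at this
  have key : ∀ i j, A i i + A i j + (A j i + A j j) = 0 := by
    intro i j
    have := h (EuclideanSpace.single i (1:ℝ) + EuclideanSpace.single j (1:ℝ))
    rwa [quad_eq_bilin, bilin_add_left, bilin_add_right, bilin_add_right,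
      bilin_single, bilin_single, bilin_single, bilin_single] at this
  ext i j
  have h1 := key i j
  have h2 : A j i = A i j := by simpa using hsym.apply i j
  rw [hdiag i, hdiag j, h2] at h1
  have : (0:ℝ) = A i j := by linarith
  simpa using this.symm

private lemma exists_sep {d : ℕ} (x y : E d × PDMat d) (hxy : x ≠ y) :
    ∃ w : E d, ⟪w, x.1 - y.1⟫ ≠ 0 ∨ quad w (x.2.1 - y.2.1) ≠ 0 := by
  by_cases hμ : x.1 = y.1
  · have hS : x.2.1 - y.2.1 ≠ 0 := by
      intro h0
      exact hxy (Prod.ext_iff.mpr ⟨hμ, Subtype.ext (sub_eq_zero.mp h0)⟩)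
    by_contra hc
    push_neg at hc
    refine hS (eq_zero_of_quad _ ?_ fun w => (hc w).2)
    exact (x.2.2.1).sub (y.2.2.1)
  · refine ⟨x.1 - y.1, Or.inl ?_⟩
    exact inner_self_ne_zero.mpr (sub_ne_zero.mpr hμ)

open MvPolynomial in
private def pairPoly {d : ℕ} (x y : E d × PDMat d) : MvPolynomial (Fin d) ℝ :=
  (∑ i, C ((x.1 - y.1) i) * X i) ^ 2
  + (∑ i, ∑ j, C ((x.2.1 - y.2.1) i j) * X i * X j) ^ 2

private lemma inner_eq_sum {d : ℕ} (w z : E d) : ⟪w, z⟫ = ∑ i, w i * z i := by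
  simp [PiLp.inner_apply, RCLike.inner_apply, starRingEnd_apply, star_trivial]
  exact Finset.sum_congr rfl fun i _ => mul_comm _ _

private lemma eval_pairPoly {d : ℕ} (x y : E d × PDMat d) (w : E d) :
    MvPolynomial.eval (fun i => w i) (pairPoly x y)
      = ⟪w, x.1 - y.1⟫ ^ 2 + (quad w (x.2.1 - y.2.1)) ^ 2 := by
  rw [inner_eq_sum]
  unfold pairPoly quad
  simp only [_root_.map_add, _root_.map_pow, map_sum, _root_.map_mul, MvPolynomial.eval_C, MvPolynomial.eval_X]
  congr 1
  · congr 1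
    exact Finset.sum_congr rfl fun i _ => mul_comm _ _  -- maybe
  · congr 1
    refine Finset.sum_congr rfl fun i _ => Finset.sum_congr rfl fun j _ => ?_
    ring

private lemma pairPoly_ne_zero {d : ℕ} (x y : E d × PDMat d) (hxy : x ≠ y) :
    pairPoly x y ≠ 0 := by
  obtain ⟨w, hw⟩ := exists_sep x y hxy
  intro h0
  have he : MvPolynomial.eval (fun i => w i) (pairPoly x y) = 0 := by rw [h0]; simp
  rw [eval_pairPoly] at he
  have h1 : ⟪w, x.1 - y.1⟫ ^ 2 = 0 ∧ (quad w (x.2.1 - y.2.1)) ^ 2 = 0 :=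
    (add_eq_zero_iff_of_nonneg (sq_nonneg _) (sq_nonneg _)).mp he
  rcases hw with hw | hw
  · exact hw (pow_eq_zero_iff (two_ne_zero) |>.mp h1.1)
  · exact hw (pow_eq_zero_iff (two_ne_zero) |>.mp h1.2)

private lemma exists_good_v {d : ℕ} (hd : 1 ≤ d) (T : Finset (E d × PDMat d)) :
    ∃ v : E d, ‖v‖ = 1 ∧ ∀ x ∈ T, ∀ y ∈ T, x ≠ y →
      ((⟪v, x.1⟫, quad v x.2.1) : ℝ × ℝ) ≠ (⟪v, y.1⟫, quad v y.2.1) := by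
  classical
  set Pr : Finset ((E d × PDMat d) × (E d × PDMat d)) :=
    (T ×ˢ T).filter (fun p => p.1 ≠ p.2) with hPr
  set P : MvPolynomial (Fin d) ℝ :=
    (∑ i, MvPolynomial.X i ^ 2) * ∏ p ∈ Pr, pairPoly p.1 p.2 with hP
  have hsq : (∑ i, (MvPolynomial.X i : MvPolynomial (Fin d) ℝ) ^ 2) ≠ 0 := by
    intro h0
    have : MvPolynomial.eval (fun _ => (1:ℝ)) (∑ i, (MvPolynomial.X i : MvPolynomial (Fin d) ℝ) ^ 2) = 0 := by
      rw [h0]; simp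
    simp only [map_sum, map_pow, MvPolynomial.eval_X, one_pow, Finset.sum_const,
      Finset.card_univ, Fintype.card_fin, nsmul_eq_mul, mul_one] at this
    have hd' : (0:ℝ) < d := by exact_mod_cast hd
    rw [this] at hd'; exact lt_irrefl _ hd'
  have hPne : P ≠ 0 :=
    mul_ne_zero hsq (Finset.prod_ne_zero_iff.mpr fun p hp =>
      pairPoly_ne_zero p.1 p.2 (by simpa [hPr] using (Finset.mem_filter.mp hp).2))
  have hex : ∃ w : Fin d → ℝ, MvPolynomial.eval w P ≠ 0 := by
    by_contra hc
    push_neg at hc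
    exact hPne (MvPolynomial.funext fun x => by rw [hc x]; simp)
  obtain ⟨w, hw⟩ := hex
  set w0 : E d := (EuclideanSpace.equiv (Fin d) ℝ).symm w with hw0
  have happ : ∀ i, w0 i = w i := fun i => rfl
  have hfac : ∀ p ∈ Pr, MvPolynomial.eval w (pairPoly p.1 p.2) ≠ 0 := by
    intro p hp
    rw [hP, _root_.map_mul, map_prod] at hw
    exact Finset.prod_ne_zero_iff.mp (right_ne_zero_of_mul hw) p hp
  have hw0ne : w0 ≠ 0 := by
    intro h0
    rw [hP, _root_.map_mul] at hw
    apply left_ne_zero_of_mul hw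
    simp only [map_sum, map_pow, MvPolynomial.eval_X]
    have : ∀ i, w i = 0 := fun i => by rw [← happ i, h0]; rfl
    simp [this]
  refine ⟨‖w0‖⁻¹ • w0, norm_smul_inv_norm hw0ne, ?_⟩
  intro x hx y hy hxy
  have hpmem : (x, y) ∈ Pr := by
    rw [hPr]; exact Finset.mem_filter.mpr ⟨Finset.mem_product.mpr ⟨hx, hy⟩, hxy⟩
  have hne := hfac (x, y) hpmem
  have hwfun : w = fun i => w0 i := funext fun i => (happ i).symm
  rw [hwfun, eval_pairPoly] at hne
  have hnpos : (0:ℝ) < ‖w0‖ := norm_pos_iff.mpr hw0ne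
  intro heq
  apply hne
  have h1 : ⟪‖w0‖⁻¹ • w0, x.1⟫ = ⟪‖w0‖⁻¹ • w0, y.1⟫ := congrArg Prod.fst heq
  have h2 : quad (‖w0‖⁻¹ • w0) x.2.1 = quad (‖w0‖⁻¹ • w0) y.2.1 := congrArg Prod.snd heq
  have h1' : ⟪w0, x.1 - y.1⟫ = 0 := by
    rw [inner_sub_right]
    have := sub_eq_zero.mpr h1
    rw [← inner_sub_right, real_inner_smul_left] at this
    have := mul_eq_zero.mp this
    rcases this with h | h
    · exact absurd h (by positivity)
    · rwa [inner_sub_right] at h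
  have h2' : quad w0 (x.2.1 - y.2.1) = 0 := by
    have hs : quad (‖w0‖⁻¹ • w0) (x.2.1 - y.2.1) = 0 := by
      rw [quad_sub, h2, sub_self]
    rw [quad_smul] at hs
    rcases mul_eq_zero.mp hs with h | h
    · exact absurd h (by positivity)
    · exact h
  rw [h1', h2']
  simp

private lemma measurable_proj {d : ℕ} (v : E d) :
    Measurable (fun x : E d × PDMat d => ((⟪v, x.1⟫, quad v x.2.1) : ℝ × ℝ)) := by
  refine Measurable.prodMk ?_ ?_
  · exact (Continuous.inner continuous_const continuous_id).measurable.comp measurable_fst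
  · unfold quad
    refine Finset.measurable_sum _ fun i _ => ?_
    refine Finset.measurable_sum _ fun j _ => ?_
    have hm : Measurable (fun x : E d × PDMat d => (x.2.1 : Mat d) i j) :=
      (measurable_pi_apply j).comp ((measurable_pi_apply i).comp
        (measurable_subtype_coe.comp measurable_snd))
    exact (hm.const_mul _).mul_const _

private lemma meas_eq_sum {X : Type*} [MeasurableSpace X] [MeasurableSingletonClass X]
    (G : Measure X) (T : Finset X) (hT : G (↑T : Set X)ᶜ = 0)
    (A : Set X) (hA : MeasurableSet A) :
    G A = ∑ y ∈ T, G (A ∩ {y}) := by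
  classical
  have h1 : G (A \ ↑T) = 0 := measure_mono_null (fun z hz => hz.2) hT
  have h2 : G A = G (A ∩ ↑T) := by
    rw [← measure_inter_add_diff A T.measurableSet, h1, add_zero]
  have h3 : A ∩ ↑T = ⋃ y ∈ T, A ∩ {y} := by
    ext z
    simp only [Set.mem_inter_iff, Finset.mem_coe, Set.mem_iUnion, Set.mem_singleton_iff]
    constructor
    · rintro ⟨hzA, hzT⟩; exact ⟨z, hzT, hzA, rfl⟩
    · rintro ⟨y, hyT, hzA, rfl⟩; exact ⟨hzA, hyT⟩
  rw [h2, h3]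
  refine measure_biUnion_finset ?_ fun y _ => hA.inter (measurableSet_singleton y)
  intro y _ y' _ hne
  exact (Set.disjoint_singleton.mpr hne).mono Set.inter_subset_right Set.inter_subset_right


/-- core lemma in the proof of Theorem 2 of the paper: two finitely
supported probability measures on `ℝ^d × S_d^{++}(ℝ)` with the same pushforwards under
all maps `P'_v(μ,Σ) = (⟨v,μ⟩, vᵀΣv)`, `‖v‖₂ = 1`, coincide. -/
theorem statement17 (d : ℕ) (hd : 1 ≤ d)
    (G₁ G₂ : Measure (E d × PDMat d))
    [IsProbabilityMeasure G₁] [IsProbabilityMeasure G₂]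
    (hf₁ : FinSupp G₁) (hf₂ : FinSupp G₂)
    (h : ∀ v : E d, ‖v‖ = 1 →
      G₁.map (fun x => ((⟪v, x.1⟫, quad v x.2.1) : ℝ × ℝ)) =
        G₂.map (fun x => ((⟪v, x.1⟫, quad v x.2.1) : ℝ × ℝ))) :
    G₁ = G₂ := by
  classical
  obtain ⟨s₁, hs₁⟩ := hf₁
  obtain ⟨s₂, hs₂⟩ := hf₂
  set T : Finset (E d × PDMat d) := s₁ ∪ s₂ with hTdef
  have hT₁ : G₁ ((↑T : Set (E d × PDMat d))ᶜ) = 0 :=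
    measure_mono_null (Set.compl_subset_compl.mpr
      (Finset.coe_subset.mpr Finset.subset_union_left)) hs₁
  have hT₂ : G₂ ((↑T : Set (E d × PDMat d))ᶜ) = 0 :=
    measure_mono_null (Set.compl_subset_compl.mpr
      (Finset.coe_subset.mpr Finset.subset_union_right)) hs₂
  obtain ⟨v, hv, hinj⟩ := exists_good_v hd T
  set f : E d × PDMat d → ℝ × ℝ := fun x => ((⟪v, x.1⟫, quad v x.2.1) : ℝ × ℝ) with hfdef
  have hm : Measurable f := measurable_proj v
  have hmeq : G₁.map f = G₂.map f := h v hv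
  have key : ∀ y ∈ T, G₁ {y} = G₂ {y} := by
    intro y hy
    set B : Set (E d × PDMat d) := f ⁻¹' {f y} with hBdef
    have hBmeas : MeasurableSet B := hm (measurableSet_singleton _)
    have hsub : ({y} : Set (E d × PDMat d)) ⊆ B := by
      intro z hz
      rw [Set.mem_singleton_iff] at hz
      subst hz
      exact rfl
    have hdiffsub : B \ {y} ⊆ (↑T : Set (E d × PDMat d))ᶜ := by
      rintro z ⟨hzB, hzy⟩ hzT
      rw [Set.mem_singleton_iff] at hzy
      exact hinj z hzT y hy hzy hzB
    have hBcap : B ∩ {y} = {y} := Set.inter_eq_right.mpr hsub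
    have e₁ : G₁ B = G₁ {y} := by
      rw [← measure_inter_add_diff B (measurableSet_singleton y), hBcap,
        measure_mono_null hdiffsub hT₁, add_zero]
    have e₂ : G₂ B = G₂ {y} := by
      rw [← measure_inter_add_diff B (measurableSet_singleton y), hBcap,
        measure_mono_null hdiffsub hT₂, add_zero]
    rw [← e₁, ← e₂, hBdef,
      ← Measure.map_apply hm (measurableSet_singleton (f y)),
      ← Measure.map_apply hm (measurableSet_singleton (f y)), hmeq]
  refine Measure.ext fun A hA => ?_
  rw [meas_eq_sum G₁ T hT₁ A hA, meas_eq_sum G₂ T hT₂ A hA]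
  refine Finset.sum_congr rfl fun y hy => ?_
  by_cases hyA : y ∈ A
  · rw [Set.inter_eq_right.mpr (Set.singleton_subset_iff.mpr hyA)]
    exact key y hy
  · have : A ∩ {y} = ∅ := by
      ext z
      simp only [Set.mem_inter_iff, Set.mem_singleton_iff, Set.mem_empty_iff_false,
        iff_false, not_and]
      rintro hzA rfl
      exact hyA hzA
    rw [this]
    simp


end PaperSOT
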